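/- The zeta transform identity used for the speedup: with f(S) = T^X_{i-1}(S, J₁,...,J_{ℓ-2}) defined on subsets S of X \ ⋃_{j=1}^{ℓ-2} J_j, for every J_{ℓ-1} ⊆ X disjoint from J₁,...,J_{ℓ-2} one has T^X_i(J₁,...,J_{ℓ-1}) = [ (J₁,...,J_{ℓ-1}) is proper ] · (ζf)(X ∩ proper(J₁,...,J_{ℓ-1})), where (ζf)(Q) = Σ_{R ⊆ Q} f(R). -/

import Mathlib

open Classical in
/-- Tuples in `U`: proper and with any `ℓ` consecutive entries pairwise disjoint. -/
noncomputable def TTable {V : Type*} [Fintype V] [DecidableEq V]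
    (w : V → V → ℕ) (ℓ s : ℕ) (X : Finset V) (i : ℕ)
    (J : Fin (ℓ - 1) → Finset V) : ℕ :=
  Nat.card {I : Fin s → Finset V //
    (∀ a b : Fin s, ∀ x ∈ I a, ∀ y ∈ I b, x ≠ y →
       w x y ≤ (((a : ℕ) : ℤ) - ((b : ℕ) : ℤ)).natAbs) ∧
    (∀ a b : Fin s, a ≠ b → (((a : ℕ) : ℤ) - ((b : ℕ) : ℤ)).natAbs < ℓ →
       Disjoint (I a) (I b)) ∧
    (∀ k : Fin s, (k : ℕ) < i - (ℓ - 1) → I k ⊆ X) ∧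
    (∀ r : Fin (ℓ - 1), ∀ h : i - (ℓ - 1) + (r : ℕ) < s,
       I ⟨i - (ℓ - 1) + (r : ℕ), h⟩ = J r) ∧
    (∀ k : Fin s, i ≤ (k : ℕ) → I k = ∅)}

/-- The window `(J₁,…,J_{ℓ-1})` is proper. -/
def ProperWindow {V : Type*} (w : V → V → ℕ) (ℓ : ℕ)
    (J : Fin (ℓ - 1) → Finset V) : Prop :=
  ∀ a b : Fin (ℓ - 1), ∀ x ∈ J a, ∀ y ∈ J b, x ≠ y →
    w x y ≤ (((a : ℕ) : ℤ) - ((b : ℕ) : ℤ)).natAbs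

open Classical in
/-- `proper(J₁,…,J_{ℓ-1})`: vertices outside ⋃ J_j compatible with the window. -/
noncomputable def ProperSet {V : Type*} [Fintype V] [DecidableEq V]
    (w : V → V → ℕ) (ℓ : ℕ) (J : Fin (ℓ - 1) → Finset V) : Finset V :=
  Finset.univ.filter (fun v =>
    (∀ j : Fin (ℓ - 1), v ∉ J j) ∧
    ∀ j : Fin (ℓ - 1), ∀ x ∈ J j, w v x ≤ (j : ℕ) + 1)

/-- Prepend `J₀` to the window, dropping its last entry. -/
def ShiftWindow {V : Type*} (ℓ : ℕ) (J0 : Finset V)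
    (J : Fin (ℓ - 1) → Finset V) : Fin (ℓ - 1) → Finset V :=
  fun r => if (r : ℕ) = 0 then J0
    else J ⟨(r : ℕ) - 1, Nat.lt_of_le_of_lt (Nat.sub_le _ _) r.isLt⟩

/-- The zeta transform: (ζf)(Q) = Σ_{R ⊆ Q} f(R). -/
def zeta {V : Type*} [DecidableEq V] (f : Finset V → ℤ) (Q : Finset V) : ℤ :=
  ∑ R ∈ Q.powerset, f R

private lemma fin_mk_ne {n A B : ℕ} (hA : A < n) (hB : B < n) (h : A ≠ B) :
    (⟨A, hA⟩ : Fin n) ≠ ⟨B, hB⟩ := fun e => h (congrArg Fin.val e)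

private lemma eq_at_of_eq_at {n : ℕ} {α : Sort*} {I : Fin n → α} {A : ℕ} {hA : A < n} {x : α}
    (hx : I ⟨A, hA⟩ = x) {B : ℕ} (hB : B < n) (hAB : A = B) : I ⟨B, hB⟩ = x := by
  subst hAB; exact hx

open Classical in
private lemma ttable_card {V : Type*} [Fintype V] [DecidableEq V]
    (w : V → V → ℕ) (ℓ s : ℕ) (X : Finset V) (i : ℕ)
    (J : Fin (ℓ - 1) → Finset V) :
    TTable w ℓ s X i J = (Finset.univ.filter fun I : Fin s → Finset V =>
    (∀ a b : Fin s, ∀ x ∈ I a, ∀ y ∈ I b, x ≠ y →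
       w x y ≤ (((a : ℕ) : ℤ) - ((b : ℕ) : ℤ)).natAbs) ∧
    (∀ a b : Fin s, a ≠ b → (((a : ℕ) : ℤ) - ((b : ℕ) : ℤ)).natAbs < ℓ →
       Disjoint (I a) (I b)) ∧
    (∀ k : Fin s, (k : ℕ) < i - (ℓ - 1) → I k ⊆ X) ∧
    (∀ r : Fin (ℓ - 1), ∀ h : i - (ℓ - 1) + (r : ℕ) < s,
       I ⟨i - (ℓ - 1) + (r : ℕ), h⟩ = J r) ∧
    (∀ k : Fin s, i ≤ (k : ℕ) → I k = ∅)).card := by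
  rw [TTable, Nat.card_eq_fintype_card, Fintype.card_subtype]

open Classical in
/- STATEMENT 12: with f(S) = T^X_{i-1}(S, J₁,…,J_{ℓ-2}),
T^X_i(J₁,…,J_{ℓ-1}) = [window proper] · (ζf)(X ∩ proper(J₁,…,J_{ℓ-1})),
and X ∩ proper(J₁,…,J_{ℓ-1}) ⊆ X \ ⋃_{j≤ℓ-2} J_j so (ζf) is evaluated in its domain. -/
theorem stmt_12 {V : Type*} [Fintype V] [DecidableEq V] (w : V → V → ℕ) (ℓ s i : ℕ)
    (hl : 2 ≤ ℓ) (hsymm : ∀ x y, w x y = w y x) (hbound : ∀ x y, w x y ≤ ℓ)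
    (hdiag : ∀ v, w v v = 0) (hi : ℓ ≤ i) (his : i ≤ s)
    (X : Finset V) (J : Fin (ℓ - 1) → Finset V)
    (hJX : ∀ r, J r ⊆ X) (hJdisj : ∀ a b, a ≠ b → Disjoint (J a) (J b)) :
    (∀ v ∈ X ∩ ProperSet w ℓ J, ∀ j : Fin (ℓ - 1), (j : ℕ) < ℓ - 2 → v ∉ J j) ∧
    (TTable w ℓ s X i J : ℤ) =
      (if ProperWindow w ℓ J then 1 else 0) *
        zeta (fun S => (TTable w ℓ s X (i - 1) (ShiftWindow ℓ S J) : ℤ))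
          (X ∩ ProperSet w ℓ J) := by
  obtain ⟨t, rfl⟩ : ∃ t, ℓ = t + 2 := ⟨ℓ - 2, by omega⟩
  obtain ⟨m, rfl⟩ : ∃ m, i = m + (t + 2) := ⟨i - (t + 2), by omega⟩
  have hm : m < s := by omega
  have hp : m + t + 1 < s := by omega
  have tlt : t < t + 2 - 1 := by omega
  refine ⟨?_, ?_⟩
  · intro v hv j _
    have h2 := (Finset.mem_inter.1 hv).2
    simp only [ProperSet, Finset.mem_filter] at h2
    exact h2.2.1 j
  have kne : ∀ (k : Fin s), (k : ℕ) ≠ m + t + 1 → k ≠ ⟨m + t + 1, hp⟩ :=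
    fun k h e => h (congrArg Fin.val e)
  by_cases hP : ProperWindow w (t + 2) J
  swap
  · -- not proper: the count is zero
    rw [if_neg hP, zero_mul]
    have : TTable w (t + 2) s X (m + (t + 2)) J = 0 := by
      rw [ttable_card, Finset.card_eq_zero, Finset.filter_eq_empty_iff]
      rintro I - ⟨h1, h2, h3, h4, h5⟩
      refine hP fun a b x hx y hy hxy => ?_
      have ha' : m + (t + 2) - (t + 2 - 1) + (a : ℕ) < s := by
        have := a.isLt; omega
      have hb' : m + (t + 2) - (t + 2 - 1) + (b : ℕ) < s := by
        have := b.isLt; omega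
      have ea := h4 a ha'
      have eb := h4 b hb'
      have key := h1 ⟨_, ha'⟩ ⟨_, hb'⟩ x (ea.symm ▸ hx) y (eb.symm ▸ hy) hxy
      simp only [Fin.val_mk] at key ⊢
      omega
    exact_mod_cast this
  rw [if_pos hP, one_mul, zeta]
  have main : TTable w (t + 2) s X (m + (t + 2)) J =
      ∑ R ∈ (X ∩ ProperSet w (t + 2) J).powerset,
        TTable w (t + 2) s X (m + (t + 2) - 1) (ShiftWindow (t + 2) R J) := by
    simp only [ttable_card]
    refine (Finset.card_eq_sum_card_fiberwise
        (f := fun I : Fin s → Finset V => I ⟨m, hm⟩)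
        (t := (X ∩ ProperSet w (t + 2) J).powerset) ?_).trans
      (Finset.sum_congr rfl fun S hS => ?_)
    · -- the fiber map lands in the powerset
      intro I hI
      rw [Finset.mem_coe, Finset.mem_filter] at hI
      obtain ⟨-, h1, h2, h3, h4, h5⟩ := hI
      rw [Finset.mem_coe, Finset.mem_powerset]
      intro v hv
      rw [Finset.mem_inter]
      have hnot : ∀ j : Fin (t + 2 - 1), v ∉ J j := by
        intro j hj
        have hj' : m + (t + 2) - (t + 2 - 1) + (j : ℕ) < s := by
          have := j.isLt; omega
        have ej := h4 j hj'
        have hd := h2 ⟨m, hm⟩ ⟨_, hj'⟩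
          (fin_mk_ne _ _ (by omega))
          (by simp only [Fin.val_mk]; have := j.isLt; omega)
        exact (Finset.disjoint_left.1 hd hv) (ej.symm ▸ hj)
      refine ⟨h3 ⟨m, hm⟩ (by simp only [Fin.val_mk]; omega) hv, ?_⟩
      simp only [ProperSet, Finset.mem_filter, Finset.mem_univ, true_and]
      refine ⟨hnot, ?_⟩
      intro j x hx
      have hj' : m + (t + 2) - (t + 2 - 1) + (j : ℕ) < s := by
        have := j.isLt; omega
      have ej := h4 j hj'
      have key := h1 ⟨m, hm⟩ ⟨_, hj'⟩ v hv x (ej.symm ▸ hx)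
        (by rintro rfl; exact hnot j hx)
      simp only [Fin.val_mk] at key
      omega
    · -- per-fiber bijection
      have hS' := Finset.mem_powerset.1 hS
      have hSX : ∀ v ∈ S, v ∈ X := fun v hv => (Finset.mem_inter.1 (hS' hv)).1
      have hSP : ∀ v ∈ S, (∀ j : Fin (t + 2 - 1), v ∉ J j) ∧
          ∀ j : Fin (t + 2 - 1), ∀ x ∈ J j, w v x ≤ (j : ℕ) + 1 := by
        intro v hv
        have h2 := (Finset.mem_inter.1 (hS' hv)).2
        simpa [ProperSet] using h2
      refine Finset.card_bij (fun I _ => Function.update I ⟨m + t + 1, hp⟩ ∅) ?_ ?_ ?_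
      · -- forward: the update satisfies the (i-1)-conditions
        intro I hI
        simp only [Finset.mem_filter, Finset.mem_univ, true_and] at hI ⊢
        obtain ⟨⟨h1, h2, h3, h4, h5⟩, hfib⟩ := hI
        refine ⟨?_, ?_, ?_, ?_, ?_⟩
        · intro a b x hx y hy hxy
          by_cases hap : a = ⟨m + t + 1, hp⟩
          · rw [hap, Function.update_self] at hx
            exact absurd hx (Finset.notMem_empty x)
          by_cases hbp : b = ⟨m + t + 1, hp⟩
          · rw [hbp, Function.update_self] at hy
            exact absurd hy (Finset.notMem_empty y)
          rw [Function.update_of_ne hap] at hx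
          rw [Function.update_of_ne hbp] at hy
          exact h1 a b x hx y hy hxy
        · intro a b hab hd
          by_cases hap : a = ⟨m + t + 1, hp⟩
          · rw [hap, Function.update_self]; exact Finset.disjoint_empty_left _
          by_cases hbp : b = ⟨m + t + 1, hp⟩
          · rw [hbp, Function.update_self]; exact Finset.disjoint_empty_right _
          rw [Function.update_of_ne hap, Function.update_of_ne hbp]
          exact h2 a b hab hd
        · intro k hk
          have hkp : k ≠ ⟨m + t + 1, hp⟩ := kne k (by omega)
          rw [Function.update_of_ne hkp]
          exact h3 k (by omega)
        · intro r hr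
          have hne : (⟨m + (t + 2) - 1 - (t + 2 - 1) + (r : ℕ), hr⟩ : Fin s) ≠ ⟨m + t + 1, hp⟩ :=
            fin_mk_ne _ _ (by have := r.isLt; omega)
          rw [Function.update_of_ne hne]
          by_cases hr0 : (r : ℕ) = 0
          · have e : (⟨m + (t + 2) - 1 - (t + 2 - 1) + (r : ℕ), hr⟩ : Fin s) = ⟨m, hm⟩ :=
              Fin.ext (by simp only [Fin.val_mk]; omega)
            rw [e, hfib]
            simp [ShiftWindow, hr0]
          · have e := eq_at_of_eq_at
              (h4 ⟨(r : ℕ) - 1, by have := r.isLt; omega⟩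
                (by simp only [Fin.val_mk]; have := r.isLt; omega))
              hr (by simp only [Fin.val_mk]; omega)
            rw [e]
            simp [ShiftWindow, hr0]
        · intro k hk
          by_cases hkp : k = ⟨m + t + 1, hp⟩
          · rw [hkp, Function.update_self]
          · rw [Function.update_of_ne hkp]
            have : (k : ℕ) ≠ m + t + 1 := fun e => hkp (Fin.ext e)
            exact h5 k (by omega)
      · -- injectivity
        intro I1 hI1 I2 hI2 he
        simp only [Finset.mem_filter, Finset.mem_univ, true_and] at hI1 hI2
        obtain ⟨⟨-, -, -, h4a, -⟩, -⟩ := hI1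
        obtain ⟨⟨-, -, -, h4b, -⟩, -⟩ := hI2
        funext k
        by_cases hkp : k = ⟨m + t + 1, hp⟩
        · have e1 := eq_at_of_eq_at (h4a ⟨t, tlt⟩
            (by simp only [Fin.val_mk]; omega)) hp (by simp only [Fin.val_mk]; omega)
          have e2 := eq_at_of_eq_at (h4b ⟨t, tlt⟩
            (by simp only [Fin.val_mk]; omega)) hp (by simp only [Fin.val_mk]; omega)
          rw [hkp, e1, e2]
        · have h := congrFun he k
          have h' : Function.update I1 ⟨m + t + 1, hp⟩ ∅ k
              = Function.update I2 ⟨m + t + 1, hp⟩ ∅ k := h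
          rwa [Function.update_of_ne hkp, Function.update_of_ne hkp] at h'
      · -- surjectivity
        intro I' hI'
        simp only [Finset.mem_filter, Finset.mem_univ, true_and] at hI'
        obtain ⟨h1', h2', h3', h4', h5'⟩ := hI'
        have e0 : I' ⟨m, hm⟩ = S := by
          have e := eq_at_of_eq_at
            (h4' ⟨0, by omega⟩ (by simp only [Fin.val_mk]; omega))
            hm (by simp only [Fin.val_mk]; omega)
          rw [e]; simp [ShiftWindow]
        -- key fact: pairs between J_t and entries of I'
        have hJt : ∀ b : Fin s, (b : ℕ) ≠ m + t + 1 → ∀ x ∈ J ⟨t, tlt⟩, ∀ y ∈ I' b,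
            x ≠ y → w x y ≤ (((m + t + 1 : ℕ) : ℤ) - ((b : ℕ) : ℤ)).natAbs := by
          intro b hb x hx y hy hxy
          have hbs := b.isLt
          by_cases hb1 : m + t + 1 ≤ (b : ℕ)
          · have : I' b = ∅ := h5' b (by omega)
            rw [this] at hy; exact absurd hy (Finset.notMem_empty y)
          push_neg at hb1
          by_cases hb2 : (b : ℕ) < m
          · have := hbound x y; omega
          push_neg at hb2
          have e := eq_at_of_eq_at
            (h4' ⟨(b : ℕ) - m, by omega⟩ (by simp only [Fin.val_mk]; omega))
            b.isLt (by simp only [Fin.val_mk]; omega)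
          have hy2 : y ∈ I' ⟨(b : ℕ), b.isLt⟩ := hy
          rw [e] at hy2
          by_cases hb0 : (b : ℕ) - m = 0
          · simp only [ShiftWindow, Fin.val_mk, hb0, if_pos rfl] at hy2
            have hkey := (hSP y hy2).2 ⟨t, tlt⟩ x hx
            rw [hsymm]
            simp only [Fin.val_mk] at hkey
            omega
          · simp only [ShiftWindow, Fin.val_mk, if_neg hb0] at hy2
            have hkey := hP ⟨t, tlt⟩ ⟨(b : ℕ) - m - 1, by omega⟩ x hx y hy2 hxy
            simp only [Fin.val_mk] at hkey
            omega
        have hJtd : ∀ b : Fin s, (b : ℕ) ≠ m + t + 1 →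
            (((m + t + 1 : ℕ) : ℤ) - ((b : ℕ) : ℤ)).natAbs < t + 2 →
            Disjoint (J ⟨t, tlt⟩) (I' b) := by
          intro b hb hd
          have hbs := b.isLt
          by_cases hb1 : m + t + 1 ≤ (b : ℕ)
          · have : I' b = ∅ := h5' b (by omega)
            rw [this]; exact Finset.disjoint_empty_right _
          push_neg at hb1
          have hb2 : m ≤ (b : ℕ) := by omega
          have e := eq_at_of_eq_at
            (h4' ⟨(b : ℕ) - m, by omega⟩ (by simp only [Fin.val_mk]; omega))
            b.isLt (by simp only [Fin.val_mk]; omega)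
          have eb : I' b = I' ⟨(b : ℕ), b.isLt⟩ := rfl
          rw [eb, e]
          by_cases hb0 : (b : ℕ) - m = 0
          · simp only [ShiftWindow, Fin.val_mk, hb0, if_pos rfl]
            exact Finset.disjoint_left.2 fun v hv hvS => (hSP v hvS).1 ⟨t, tlt⟩ hv
          · simp only [ShiftWindow, Fin.val_mk, if_neg hb0]
            exact hJdisj _ _ (fin_mk_ne _ _ (by omega))
        refine ⟨Function.update I' ⟨m + t + 1, hp⟩ (J ⟨t, tlt⟩), ?_, ?_⟩
        · simp only [Finset.mem_filter, Finset.mem_univ, true_and]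
          refine ⟨⟨?_, ?_, ?_, ?_, ?_⟩, ?_⟩
          · -- pairwise weights
            intro a b x hx y hy hxy
            by_cases hap : a = ⟨m + t + 1, hp⟩ <;> by_cases hbp : b = ⟨m + t + 1, hp⟩
            · rw [hap, Function.update_self] at hx
              rw [hbp, Function.update_self] at hy
              have hkey := hP ⟨t, tlt⟩ ⟨t, tlt⟩ x hx y hy hxy
              rw [hap, hbp]
              simp only [Fin.val_mk] at hkey ⊢
              omega
            · rw [hap, Function.update_self] at hx
              rw [Function.update_of_ne hbp] at hy
              have hkey := hJt b (fun e => hbp (Fin.ext e)) x hx y hy hxy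
              rw [hap]
              simp only [Fin.val_mk] at hkey ⊢
              omega
            · rw [hbp, Function.update_self] at hy
              rw [Function.update_of_ne hap] at hx
              have hkey := hJt a (fun e => hap (Fin.ext e)) y hy x hx (Ne.symm hxy)
              rw [hbp, hsymm]
              simp only [Fin.val_mk] at hkey ⊢
              omega
            · rw [Function.update_of_ne hap] at hx
              rw [Function.update_of_ne hbp] at hy
              exact h1' a b x hx y hy hxy
          · -- disjointness
            intro a b hab hd
            by_cases hap : a = ⟨m + t + 1, hp⟩ <;> by_cases hbp : b = ⟨m + t + 1, hp⟩
            · exact absurd (hap.trans hbp.symm) hab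
            · rw [hap, Function.update_self, Function.update_of_ne hbp]
              refine hJtd b (fun e => hbp (Fin.ext e)) ?_
              rw [hap] at hd
              simp only [Fin.val_mk] at hd ⊢
              omega
            · rw [hbp, Function.update_self, Function.update_of_ne hap]
              refine (hJtd a (fun e => hap (Fin.ext e)) ?_).symm
              rw [hbp] at hd
              simp only [Fin.val_mk] at hd ⊢
              omega
            · rw [Function.update_of_ne hap, Function.update_of_ne hbp]
              exact h2' a b hab hd
          · -- contained in X
            intro k hk
            have hkp : k ≠ ⟨m + t + 1, hp⟩ := kne k (by omega)
            rw [Function.update_of_ne hkp]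
            by_cases hkm : (k : ℕ) = m
            · have : k = ⟨m, hm⟩ := Fin.ext hkm
              rw [this, e0]
              exact fun v hv => hSX v hv
            · exact h3' k (by omega)
          · -- the window
            intro r hr
            by_cases hrt : (r : ℕ) = t
            · have e : (⟨m + (t + 2) - (t + 2 - 1) + (r : ℕ), hr⟩ : Fin s) = ⟨m + t + 1, hp⟩ :=
                Fin.ext (by simp only [Fin.val_mk]; omega)
              rw [e, Function.update_self]
              have : r = ⟨t, tlt⟩ := Fin.ext (by simp only [Fin.val_mk]; omega)
              rw [this]
            · have hne : (⟨m + (t + 2) - (t + 2 - 1) + (r : ℕ), hr⟩ : Fin s) ≠ ⟨m + t + 1, hp⟩ :=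
                fin_mk_ne _ _ (by have := r.isLt; omega)
              rw [Function.update_of_ne hne]
              have e := eq_at_of_eq_at
                (h4' ⟨(r : ℕ) + 1, by have := r.isLt; omega⟩
                  (by simp only [Fin.val_mk]; have := r.isLt; omega))
                hr (by simp only [Fin.val_mk]; omega)
              rw [e]
              simp [ShiftWindow, Fin.eta]
          · -- empty tail
            intro k hk
            have hkp : k ≠ ⟨m + t + 1, hp⟩ := kne k (by omega)
            rw [Function.update_of_ne hkp]
            exact h5' k (by omega)
          · -- fiber condition
            rw [Function.update_of_ne (fin_mk_ne hm hp (by omega))]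
            exact e0
        · -- update composes to the identity
          show Function.update (Function.update I' ⟨m + t + 1, hp⟩ (J ⟨t, tlt⟩))
            ⟨m + t + 1, hp⟩ ∅ = I'
          rw [Function.update_idem]
          have : I' ⟨m + t + 1, hp⟩ = ∅ :=
            h5' ⟨m + t + 1, hp⟩ (by simp only [Fin.val_mk]; omega)
          rw [← this, Function.update_eq_self]
  exact_mod_cast main
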